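/- Let (S,·) be a commutative semigroup, let e be an ultrafilter on S belonging to the smallest two-sided ideal K(βS) of βS, let A ∈ e, let l ∈ ℕ, and for each j ∈ {0,…,l-1} let ⟨y_{j,n}⟩_{n=0}^∞ be a sequence in S. Then there exist a ∈ S and α ∈ P_f(ω) such that a · ∏_{t∈α} y_{j,t} ∈ A for every j ∈ {0,…,l-1}. -/

import Mathlib

/- The semigroup structure on `βS = Ultrafilter S`, with
`A ∈ p * q ↔ {s | {t | s * t ∈ A} ∈ q} ∈ p`. -/
attribute [local instance] Ultrafilter.mul Ultrafilter.semigroup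

/-- The ordered product of a `Monoid`-valued function over a finite set of
natural-number indices, the factors being taken in increasing order of the indices. -/
def oListProd {M : Type*} [Monoid M] (f : ℕ → M) (α : Finset ℕ) : M :=
  ((α.sort (· ≤ ·)).map f).prod

/-- The ordered product `∏_{t ∈ α} f t` for a semigroup-valued `f`, computed in the
monoid `WithOne S`.  For nonempty `α` this is the genuine product (in increasing order
of indices) of the `f t ∈ S`, viewed in `WithOne S`. -/
def oProd {S : Type*} [Semigroup S] (f : ℕ → S) (α : Finset ℕ) : WithOne S :=
  oListProd (fun t => (f t : WithOne S)) α

/-- A left ideal of `βS`: a nonempty `L ⊆ βS` with `βS · L ⊆ L`. -/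
def IsLeftIdeal {S : Type*} [Semigroup S] (L : Set (Ultrafilter S)) : Prop :=
  L.Nonempty ∧ ∀ p : Ultrafilter S, ∀ q ∈ L, p * q ∈ L

/-- A minimal left ideal of `βS`. -/
def IsMinimalLeftIdeal {S : Type*} [Semigroup S] (L : Set (Ultrafilter S)) : Prop :=
  IsLeftIdeal L ∧ ∀ L' : Set (Ultrafilter S), IsLeftIdeal L' → L' ⊆ L → L' = L

section Aux

open Filter

variable {S : Type*} [CommSemigroup S]

theorem CSSC.list_coe_prod (lst : List S) (h : lst ≠ []) :
    ∃ s : S, (lst.map WithOne.coe).prod = WithOne.coe s := by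
  induction lst with
  | nil => exact absurd rfl h
  | cons a t ih =>
    cases t with
    | nil => exact ⟨a, by simp⟩
    | cons b u =>
      obtain ⟨s, hs⟩ := ih (by simp)
      refine ⟨a * s, ?_⟩
      rw [List.map_cons, List.prod_cons, hs, WithOne.coe_mul]

open Classical in
/-- The product of `f` over a nonempty finite `α ⊆ ℕ`, in increasing order of indices,
as an element of `S` (junk value for empty `α`). -/
noncomputable def CSSC.sprod (f : ℕ → S) (α : Finset ℕ) : S :=
  if h : ∃ s : S, oProd f α = WithOne.coe s then h.choose else f 0

theorem CSSC.coe_sprod (f : ℕ → S) {α : Finset ℕ} (h : α.Nonempty) :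
    WithOne.coe (CSSC.sprod f α) = oProd f α := by
  have hnil : (α.sort (· ≤ ·)).map f ≠ [] := by
    obtain ⟨a, ha⟩ := h
    intro hcon
    have h1 : a ∈ α.sort (· ≤ ·) := (Finset.mem_sort _).mpr ha
    have h2 := List.mem_map_of_mem (f := f) h1
    rw [hcon] at h2
    exact List.not_mem_nil h2
  have he : ∃ s : S, oProd f α = WithOne.coe s := by
    obtain ⟨s, hs⟩ := CSSC.list_coe_prod ((α.sort (· ≤ ·)).map f) hnil
    refine ⟨s, ?_⟩
    rw [← hs]
    unfold oProd oListProd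
    rw [List.map_map]
    rfl
  unfold CSSC.sprod
  rw [dif_pos he]
  exact he.choose_spec.symm

theorem CSSC.sort_union (α β : Finset ℕ) (h : ∀ i ∈ α, ∀ k ∈ β, i < k) :
    (α ∪ β).sort (· ≤ ·) = α.sort (· ≤ ·) ++ β.sort (· ≤ ·) := by
  have hd : Disjoint α β := by
    rw [Finset.disjoint_left]
    intro a ha hb
    exact lt_irrefl a (h a ha a hb)
  have hperm : List.Perm ((α ∪ β).sort (· ≤ ·)) (α.sort (· ≤ ·) ++ β.sort (· ≤ ·)) := by
    apply Multiset.coe_eq_coe.mp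
    have h1 : ((α ∪ β).sort (· ≤ ·) : Multiset ℕ) = (α ∪ β).1 := Finset.sort_eq _ _
    have h2 : (α ∪ β).1 = α.1 + β.1 := by
      rw [← Finset.disjUnion_eq_union α β hd]
      rfl
    have h3 : ((α.sort (· ≤ ·) ++ β.sort (· ≤ ·) : List ℕ) : Multiset ℕ)
        = (α.sort (· ≤ ·) : Multiset ℕ) + (β.sort (· ≤ ·) : Multiset ℕ) := rfl
    rw [h1, h2, h3, Finset.sort_eq, Finset.sort_eq]
  have hsorted : (α.sort (· ≤ ·) ++ β.sort (· ≤ ·)).Pairwise (· ≤ ·) := by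
    refine List.pairwise_append.mpr
      ⟨Finset.pairwise_sort _ _, Finset.pairwise_sort _ _, ?_⟩
    intro a ha b hb
    exact (h a ((Finset.mem_sort _).mp ha) b ((Finset.mem_sort _).mp hb)).le
  exact List.Perm.eq_of_pairwise' (Finset.pairwise_sort _ _) hsorted hperm

theorem CSSC.sprod_union (f : ℕ → S) {α β : Finset ℕ} (hα : α.Nonempty) (hβ : β.Nonempty)
    (h : ∀ i ∈ α, ∀ k ∈ β, i < k) :
    CSSC.sprod f (α ∪ β) = CSSC.sprod f α * CSSC.sprod f β := by
  have hαβ : (α ∪ β).Nonempty := hα.mono Finset.subset_union_left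
  have key : WithOne.coe (CSSC.sprod f (α ∪ β))
      = WithOne.coe (CSSC.sprod f α * CSSC.sprod f β) := by
    rw [CSSC.coe_sprod f hαβ, WithOne.coe_mul, CSSC.coe_sprod f hα, CSSC.coe_sprod f hβ]
    unfold oProd oListProd
    rw [CSSC.sort_union α β h, List.map_append, List.prod_append]
  exact WithOne.coe_inj.mp key

theorem CSSC.mem_ultra_mul {p q : Ultrafilter S} {A : Set S} :
    A ∈ p * q ↔ {s | {t | s * t ∈ A} ∈ q} ∈ p := Iff.rfl

/-- Tuples of ultrafilters jointly approximable by diagonal tuples. -/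
def CSSC.DSet (S : Type*) [CommSemigroup S] (l : ℕ) : Set (Fin l → Ultrafilter S) :=
  {x | ∀ A : Fin l → Set S, (∀ j, A j ∈ x j) → ∃ c : S, ∀ j, c ∈ A j}

/-- Tuples of ultrafilters jointly approximable by tuples `(a * ∏_{t ∈ α} y j t)_j`
with `min α` arbitrarily large. -/
def CSSC.ISet {S : Type*} [CommSemigroup S] {l : ℕ} (y : Fin l → ℕ → S) :
    Set (Fin l → Ultrafilter S) :=
  {x | ∀ n : ℕ, ∀ A : Fin l → Set S, (∀ j, A j ∈ x j) →
    ∃ (a : S) (α : Finset ℕ), α.Nonempty ∧ (∀ k ∈ α, n < k) ∧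
      ∀ j, a * CSSC.sprod (y j) α ∈ A j}

variable {l : ℕ} {y : Fin l → ℕ → S}

theorem CSSC.DSet_mul_ISet {x v : Fin l → Ultrafilter S}
    (hx : x ∈ CSSC.DSet S l) (hv : v ∈ CSSC.ISet y) : x * v ∈ CSSC.ISet y := by
  intro n A hA
  have hB : ∀ j, {s | {t | s * t ∈ A j} ∈ v j} ∈ x j := by
    intro j
    exact CSSC.mem_ultra_mul.mp (hA j)
  obtain ⟨s, hs⟩ := hx _ hB
  obtain ⟨a, α, hne, hgt, hj⟩ := hv n (fun j => {t | s * t ∈ A j}) hs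
  refine ⟨s * a, α, hne, hgt, fun j => ?_⟩
  have := hj j
  rw [mul_assoc]
  exact this

theorem CSSC.ISet_mul_ISet {v w : Fin l → Ultrafilter S}
    (hv : v ∈ CSSC.ISet y) (hw : w ∈ CSSC.ISet y) : v * w ∈ CSSC.ISet y := by
  intro n A hA
  have hB : ∀ j, {s | {t | s * t ∈ A j} ∈ w j} ∈ v j := fun j => CSSC.mem_ultra_mul.mp (hA j)
  obtain ⟨a, α, hne, hgt, hj⟩ := hv n _ hB
  obtain ⟨b, β, hne', hgt', hj'⟩ :=
    hw (α.sup id) (fun j => {t | (a * CSSC.sprod (y j) α) * t ∈ A j}) (fun j => hj j)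
  have hcross : ∀ i ∈ α, ∀ k ∈ β, i < k := fun i hi k hk =>
    lt_of_le_of_lt (Finset.le_sup (f := id) hi) (hgt' k hk)
  refine ⟨a * b, α ∪ β, hne.mono Finset.subset_union_left, ?_, ?_⟩
  · intro k hk
    rcases Finset.mem_union.mp hk with hk | hk
    · exact hgt k hk
    · obtain ⟨i, hi⟩ := hne
      exact lt_trans (hgt i hi) (hcross i hi k hk)
  · intro j
    have h1 := hj' j
    rw [CSSC.sprod_union (y j) hne hne' hcross, mul_mul_mul_comm]
    exact h1

theorem CSSC.q_mul_mem_ISet (𝔪 : Ultrafilter (Finset ℕ))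
    (h𝔪 : ∀ n : ℕ, {α : Finset ℕ | α.Nonempty ∧ ∀ k ∈ α, n < k} ∈ 𝔪)
    {x : Fin l → Ultrafilter S} (hx : x ∈ CSSC.DSet S l) :
    (fun j => 𝔪.map (CSSC.sprod (y j)) * x j) ∈ CSSC.ISet y := by
  intro n A hA
  have hC : ∀ j, {α : Finset ℕ | {t | CSSC.sprod (y j) α * t ∈ A j} ∈ x j} ∈ 𝔪 := by
    intro j
    have h1 : {s | {t | s * t ∈ A j} ∈ x j} ∈ 𝔪.map (CSSC.sprod (y j)) :=
      CSSC.mem_ultra_mul.mp (hA j)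
    exact Ultrafilter.mem_map.mp h1
  have hall : ({α : Finset ℕ | α.Nonempty ∧ ∀ k ∈ α, n < k} ∩
      ⋂ j, {α : Finset ℕ | {t | CSSC.sprod (y j) α * t ∈ A j} ∈ x j}) ∈ 𝔪 :=
    Filter.inter_mem (h𝔪 n) (Filter.iInter_mem.mpr hC)
  obtain ⟨α, ⟨hne, hgt⟩, hmem⟩ := Ultrafilter.nonempty_of_mem hall
  have hxm : ∀ j, {t | CSSC.sprod (y j) α * t ∈ A j} ∈ x j := fun j =>
    Set.mem_iInter.mp hmem j
  obtain ⟨c, hc⟩ := hx _ hxm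
  refine ⟨c, α, hne, hgt, fun j => ?_⟩
  have := hc j
  rw [mul_comm]
  exact this

theorem CSSC.diag_mem_DSet (e : Ultrafilter S) : (fun _ : Fin l => e) ∈ CSSC.DSet S l := by
  intro A hA
  have hI : (⋂ j, A j) ∈ e := Filter.iInter_mem.mpr hA
  obtain ⟨c, hc⟩ := Ultrafilter.nonempty_of_mem hI
  exact ⟨c, fun j => Set.mem_iInter.mp hc j⟩

theorem CSSC.isClosed_ISet : IsClosed (CSSC.ISet y) := by
  have hrw : CSSC.ISet y = ⋂ (n : ℕ), ⋂ (A : Fin l → Set S),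
      {x : Fin l → Ultrafilter S | (∀ j, A j ∈ x j) →
        ∃ (a : S) (α : Finset ℕ), α.Nonempty ∧ (∀ k ∈ α, n < k) ∧
          ∀ j, a * CSSC.sprod (y j) α ∈ A j} := by
    ext x
    simp only [CSSC.ISet, Set.mem_setOf_eq, Set.mem_iInter]
  rw [hrw]
  refine isClosed_iInter fun n => isClosed_iInter fun A => ?_
  by_cases h : ∃ (a : S) (α : Finset ℕ), α.Nonempty ∧ (∀ k ∈ α, n < k) ∧
      ∀ j, a * CSSC.sprod (y j) α ∈ A j
  · have : {x : Fin l → Ultrafilter S | (∀ j, A j ∈ x j) →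
        ∃ (a : S) (α : Finset ℕ), α.Nonempty ∧ (∀ k ∈ α, n < k) ∧
          ∀ j, a * CSSC.sprod (y j) α ∈ A j} = Set.univ :=
      Set.eq_univ_of_forall fun x _ => h
    rw [this]
    exact isClosed_univ
  · have : {x : Fin l → Ultrafilter S | (∀ j, A j ∈ x j) →
        ∃ (a : S) (α : Finset ℕ), α.Nonempty ∧ (∀ k ∈ α, n < k) ∧
          ∀ j, a * CSSC.sprod (y j) α ∈ A j}
        = {x : Fin l → Ultrafilter S | ∀ j, A j ∈ x j}ᶜ := by
      ext x
      simp only [Set.mem_setOf_eq, Set.mem_compl_iff]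
      constructor
      · intro hx hcon
        exact h (hx hcon)
      · intro hx hcon
        exact absurd hcon hx
    rw [this]
    rw [isClosed_compl_iff]
    have : {x : Fin l → Ultrafilter S | ∀ j, A j ∈ x j}
        = ⋂ j, (fun x : Fin l → Ultrafilter S => x j) ⁻¹' {u : Ultrafilter S | A j ∈ u} := by
      ext x
      simp
    rw [this]
    exact isOpen_iInter_of_finite fun j =>
      (ultrafilter_isOpen_basic _).preimage (continuous_apply j)

end Aux

/-- Let `S` be a commutative semigroup, let `e ∈ K(βS)` (i.e. `e` belongs to some
minimal left ideal of `βS`), let `A ∈ e`, let `l ∈ ℕ`, and for each `j ∈ {0,…,l-1}`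
let `⟨y j n⟩ₙ` be a sequence in `S`.  Then there are `a ∈ S` and `α ∈ P_f(ω)` such
that `a * ∏_{t∈α} y j t ∈ A` for every `j`. -/
theorem central_sets_special_case
    {S : Type*} [CommSemigroup S] (e : Ultrafilter S)
    (hK : ∃ L : Set (Ultrafilter S), IsMinimalLeftIdeal L ∧ e ∈ L)
    (A : Set S) (hA : A ∈ e) (l : ℕ) (y : Fin l → ℕ → S) :
    ∃ (a : S) (α : Finset ℕ), α.Nonempty ∧
      ∀ j : Fin l, ∃ p ∈ A, (p : WithOne S) = (a : WithOne S) * oProd (y j) α := by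
  classical
  obtain ⟨L, ⟨⟨hLne, habs⟩, hmin⟩, heL⟩ := hK
  -- the tail ultrafilter on `Finset ℕ`
  let F : Filter (Finset ℕ) := Filter.map (fun n => ({n} : Finset ℕ)) Filter.atTop
  haveI : F.NeBot := Filter.map_neBot
  let 𝔪 : Ultrafilter (Finset ℕ) := Ultrafilter.of F
  have h𝔪 : ∀ n : ℕ, {α : Finset ℕ | α.Nonempty ∧ ∀ k ∈ α, n < k} ∈ 𝔪 := by
    intro n
    apply Ultrafilter.of_le F
    have : {k : ℕ | ({k} : Finset ℕ).Nonempty ∧ ∀ m ∈ ({k} : Finset ℕ), n < m} ∈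
        (Filter.atTop : Filter ℕ) := by
      apply Filter.mem_of_superset (Filter.Ici_mem_atTop (n + 1))
      intro k hk
      refine ⟨Finset.singleton_nonempty k, fun m hm => ?_⟩
      rw [Finset.mem_singleton] at hm
      subst hm
      exact Nat.lt_of_succ_le hk
    exact this
  -- `L` is closed: it equals the range of right multiplication by `e`.
  have hLrange : L = Set.range (· * e) := by
    refine (hmin (Set.range (· * e)) ⟨⟨e * e, ⟨e, rfl⟩⟩, ?_⟩ ?_).symm
    · rintro p q ⟨p', rfl⟩
      refine ⟨p * p', ?_⟩
      show p * p' * e = p * (p' * e)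
      rw [mul_assoc]
    · rintro q ⟨p, rfl⟩
      exact habs p e heL
  have hLclosed : IsClosed L := by
    rw [hLrange]
    exact (isCompact_range (Ultrafilter.continuous_mul_left e)).isClosed
  -- `e * g = e` for any idempotent `g ∈ L`.
  have he_mul_idem : ∀ g ∈ L, g * g = g → e * g = e := by
    intro g hgL hgg
    have hL' : ((· * g) '' L) = L := by
      refine hmin _ ⟨⟨e * g, e, heL, rfl⟩, ?_⟩ ?_
      · rintro p q ⟨p', hp'L, rfl⟩
        refine ⟨p * p', habs p p' hp'L, ?_⟩
        show p * p' * g = p * (p' * g)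
        rw [mul_assoc]
      · rintro q ⟨p', _, rfl⟩
        exact habs p' g hgL
    obtain ⟨p', _, hp'⟩ := hL'.symm ▸ heL
    rw [← hp', mul_assoc, hgg]
  -- the compact subsemigroup `M = ISet ∩ L^l` of `Y = (βS)^l`
  let Y := Fin l → Ultrafilter S
  let LS : Set Y := {x | ∀ j, x j ∈ L}
  let M : Set Y := CSSC.ISet y ∩ LS
  have hMne : M.Nonempty := by
    refine ⟨fun j => 𝔪.map (CSSC.sprod (y j)) * e, ?_, ?_⟩
    · exact CSSC.q_mul_mem_ISet 𝔪 h𝔪 (CSSC.diag_mem_DSet e)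
    · intro j
      exact habs _ e heL
  have hLSclosed : IsClosed LS := by
    have : LS = ⋂ j, (fun x : Y => x j) ⁻¹' L := by
      ext x
      simp [LS]
    rw [this]
    exact isClosed_iInter fun j => hLclosed.preimage (continuous_apply j)
  have hMcompact : IsCompact M := (CSSC.isClosed_ISet.inter hLSclosed).isCompact
  have hMmul : ∀ x ∈ M, ∀ v ∈ M, x * v ∈ M := by
    intro x hx v hv
    refine ⟨CSSC.ISet_mul_ISet hx.1 hv.1, fun j => ?_⟩
    exact habs (x j) (v j) (hv.2 j)
  obtain ⟨g, hgM, hgidem⟩ := exists_idempotent_in_compact_subsemigroup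
    (fun r : Y => continuous_pi fun j =>
      (Ultrafilter.continuous_mul_left (r j)).comp (continuous_apply j))
    M hMne hMcompact hMmul
  -- the diagonal `ē = ē * g` lies in `ISet`
  have heDiag : (fun _ : Fin l => e) ∈ CSSC.ISet y := by
    have hdiag : (fun _ : Fin l => e) = (fun _ : Fin l => e) * g := by
      funext j
      have hgj : g j * g j = g j := congrFun hgidem j
      exact (he_mul_idem (g j) (hgM.2 j) hgj).symm
    rw [hdiag]
    exact CSSC.DSet_mul_ISet (CSSC.diag_mem_DSet e) hgM.1
  obtain ⟨a, α, hne, _, hj⟩ := heDiag 0 (fun _ => A) (fun _ => hA)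
  refine ⟨a, α, hne, fun j => ⟨a * CSSC.sprod (y j) α, hj j, ?_⟩⟩
  show WithOne.coe (a * CSSC.sprod (y j) α) = WithOne.coe a * oProd (y j) α
  rw [WithOne.coe_mul, CSSC.coe_sprod _ hne]
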